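/- arXiv:0910.4207 — 2 statements merged into one kernel-verified Lean document; each statement's English description precedes it below -/
import Mathlib

section
/- Let G be a connected graph (possibly countably infinite) and T a spanning tree of G rooted at a vertex Φ. For every edge e = (Ψ, Υ) of G not in T, let β_e denote the closed walk at Φ obtained by concatenating the unique path in T from Φ to Ψ, the edge e, and the unique path in T from Υ back to Φ. Then every closed walk at Φ is homotopic (relative to insertions and deletions of backtracking subwalks of the form x·x⁻¹) to a concatenation of walks of the form β_e and their reverses. -/
open SimpleGraph

/-- Equivalence of walks under insertion/deletion of immediate backtracks. -/
inductive WalkEquiv {V : Type*} {G : SimpleGraph V} :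
    ∀ {u v : V}, G.Walk u v → G.Walk u v → Prop
  | refl {u v : V} (p : G.Walk u v) : WalkEquiv p p
  | symm {u v : V} {p q : G.Walk u v} : WalkEquiv p q → WalkEquiv q p
  | trans {u v : V} {p q r : G.Walk u v} : WalkEquiv p q → WalkEquiv q r → WalkEquiv p r
  | backtrack {u w x v : V} (p : G.Walk u w) (h : G.Adj w x) (q : G.Walk w v) :
      WalkEquiv (p.append q) (p.append (Walk.cons h (Walk.cons h.symm q)))

section Aux

variable {V V' : Type*} {G : SimpleGraph V} {G' : SimpleGraph V'}

lemma WalkEquiv.append_right {u v w : V} {p q : G.Walk u v} (he : WalkEquiv p q)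
    (r : G.Walk v w) : WalkEquiv (p.append r) (q.append r) := by
  induction he with
  | refl => exact .refl _
  | symm _ ih => exact (ih r).symm
  | trans _ _ ih1 ih2 => exact (ih1 r).trans (ih2 r)
  | backtrack p h q =>
      rw [← Walk.append_assoc, ← Walk.append_assoc, Walk.cons_append, Walk.cons_append]
      exact .backtrack p h (q.append r)

lemma WalkEquiv.append_left {u v w : V} (r : G.Walk u v) {p q : G.Walk v w}
    (he : WalkEquiv p q) : WalkEquiv (r.append p) (r.append q) := by
  induction he with
  | refl => exact .refl _
  | symm _ ih => exact (ih).symm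
  | trans _ _ ih1 ih2 => exact (ih1).trans (ih2)
  | backtrack p h q =>
      rw [Walk.append_assoc, Walk.append_assoc]
      exact .backtrack (r.append p) h q

lemma WalkEquiv.cons_congr {u v w : V} {h : G.Adj u v} {p q : G.Walk v w}
    (he : WalkEquiv p q) : WalkEquiv (Walk.cons h p) (Walk.cons h q) := by
  simpa [Walk.cons_nil_append] using WalkEquiv.append_left (Walk.cons h Walk.nil) he

lemma walkEquiv_reverse_append {a b : V} (q : G.Walk a b) :
    WalkEquiv (q.reverse.append q) Walk.nil := by
  induction q with
  | nil => exact .refl _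
  | @cons a c b h q' ih =>
      rw [Walk.reverse_cons, ← Walk.append_assoc, Walk.cons_nil_append]
      exact ((WalkEquiv.backtrack q'.reverse h.symm q').symm).trans ih

lemma walkEquiv_append_reverse {a b : V} (q : G.Walk a b) :
    WalkEquiv (q.append q.reverse) Walk.nil := by
  simpa [Walk.reverse_reverse] using walkEquiv_reverse_append q.reverse

lemma WalkEquiv.map (f : G →g G') {u v : V} {p q : G.Walk u v}
    (he : WalkEquiv p q) : WalkEquiv (p.map f) (q.map f) := by
  induction he with
  | refl => exact .refl _
  | symm _ ih => exact (ih).symm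
  | trans _ _ ih1 ih2 => exact (ih1).trans (ih2)
  | backtrack p h q =>
      rw [Walk.map_append, Walk.map_append, Walk.map_cons, Walk.map_cons]
      exact .backtrack (p.map f) (f.map_adj h) (q.map f)

end Aux

/-- Theorem 3.1 (graph form): every closed walk at the root `Φ` is equivalent, up to
insertion and deletion of backtracks, to a concatenation of the standard closed walks
`β_e` (tree path to the tail of a non-tree edge `e`, across `e`, tree path back)
and their reverses. -/
theorem closed_walk_is_concatenation_of_fundamental_cycles
    {V : Type*} (G T : SimpleGraph V) (hle : T ≤ G) (hGconn : G.Connected)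
    (hT : T.IsTree) (Φ : V)
    (β : ∀ ⦃u v : V⦄, G.Adj u v → ¬ T.Adj u v → G.Walk Φ Φ)
    (hβ : ∀ ⦃u v : V⦄ (h : G.Adj u v) (hn : ¬ T.Adj u v),
      ∃ (p : T.Walk Φ u) (q : T.Walk v Φ), p.IsPath ∧ q.IsPath ∧
        β h hn = ((p.mapLe hle).append (Walk.cons h (q.mapLe hle)))) :
    ∀ w : G.Walk Φ Φ, ∃ L : List (G.Walk Φ Φ),
      (∀ x ∈ L, (∃ (u v : V) (h : G.Adj u v) (hn : ¬ T.Adj u v), x = β h hn) ∨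
        (∃ (u v : V) (h : G.Adj u v) (hn : ¬ T.Adj u v), x = (β h hn).reverse)) ∧
      WalkEquiv w (L.foldr Walk.append Walk.nil) := by
  classical
  -- choose the canonical tree path from the root to each vertex
  choose pth hpth huniq using fun v => hT.existsUnique_path Φ v
  -- closed walks in the tree made from a tree edge and root paths are trivial
  have treeCase : ∀ {u x : V} (ht : T.Adj u x),
      WalkEquiv ((pth u).append (Walk.cons ht (pth x).reverse)) (Walk.nil) := by
    intro u x ht
    by_cases hx : x ∈ (pth u).support
    · have h1 : (pth u).takeUntil x hx = pth x := huniq x _ ((hpth u).takeUntil hx)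
      have hsingle : (Walk.cons ht.symm (Walk.nil : T.Walk u u)).IsPath :=
        Walk.IsPath.nil.cons (by simpa using ht.ne')
      have h2 : (pth u).dropUntil x hx = Walk.cons ht.symm Walk.nil :=
        ExistsUnique.unique (hT.existsUnique_path x u) ((hpth u).dropUntil hx) hsingle
      have h3 : pth u = (pth x).append (Walk.cons ht.symm Walk.nil) := by
        conv_lhs => rw [← Walk.take_spec (pth u) hx]
        rw [h1, h2]
      rw [h3, ← Walk.append_assoc, Walk.cons_nil_append]
      exact ((WalkEquiv.backtrack (pth x) ht.symm (pth x).reverse).symm).trans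
        (walkEquiv_append_reverse _)
    · have hrev : ((Walk.cons ht.symm (pth u).reverse) : T.Walk x Φ).IsPath :=
        ((hpth u).reverse).cons (by simpa [Walk.support_reverse] using hx)
      have heq : (Walk.cons ht.symm (pth u).reverse).reverse
          = (pth u).append (Walk.cons ht Walk.nil) := by
        rw [Walk.reverse_cons, Walk.reverse_reverse]
      have h4 : pth x = (pth u).append (Walk.cons ht Walk.nil) := by
        rw [← heq]
        exact (huniq x _ hrev.reverse).symm
      rw [h4, Walk.reverse_append, Walk.reverse_cons, Walk.reverse_nil, Walk.nil_append,
        Walk.cons_nil_append]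
      exact ((WalkEquiv.backtrack (pth u) ht (pth u).reverse).symm).trans
        (walkEquiv_append_reverse _)
  -- main induction over arbitrary walks
  have M : ∀ {u v : V} (w : G.Walk u v), ∃ L : List (G.Walk Φ Φ),
      (∀ x ∈ L, (∃ (u v : V) (h : G.Adj u v) (hn : ¬ T.Adj u v), x = β h hn) ∨
        (∃ (u v : V) (h : G.Adj u v) (hn : ¬ T.Adj u v), x = (β h hn).reverse)) ∧
      WalkEquiv (((pth u).mapLe hle).append (w.append ((pth v).mapLe hle).reverse))
        (L.foldr Walk.append Walk.nil) := by
    intro u v w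
    induction w with
    | nil =>
        rename_i a
        exact ⟨[], by simp, by
          simpa [Walk.nil_append, Walk.mapLe, Walk.reverse_map] using
            walkEquiv_append_reverse ((pth a).mapLe hle)⟩
    | @cons u x v h w' ih =>
        obtain ⟨L, hL, hw⟩ := ih
        set Pu := (pth u).mapLe hle with hPu
        set Px := (pth x).mapLe hle with hPx
        set Pv := (pth v).mapLe hle with hPv
        set S := w'.append Pv.reverse with hS
        set γ := Pu.append (Walk.cons h Px.reverse) with hγ
        have e1 : WalkEquiv (Px.reverse.append (Px.append S)) S := by
          rw [Walk.append_assoc]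
          exact (walkEquiv_reverse_append Px).append_right S
        have e2 : WalkEquiv (Pu.append ((Walk.cons h w').append Pv.reverse))
            (γ.append (Px.append S)) := by
          have h1 := WalkEquiv.append_left Pu (WalkEquiv.cons_congr (h := h) e1.symm)
          simpa only [hγ, hS, Walk.cons_append, ← Walk.append_assoc] using h1
        by_cases htx : T.Adj u x
        · have hγnil : WalkEquiv γ Walk.nil := by
            have h2 := WalkEquiv.map (Hom.ofLE hle) (treeCase htx)
            simpa [hγ, hPu, hPx, Walk.mapLe, Walk.map_append, Walk.map_cons,
              Walk.reverse_map] using h2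
          refine ⟨L, hL, ?_⟩
          exact e2.trans ((hγnil.append_right _).trans hw)
        · have hγβ : γ = β h htx := by
            obtain ⟨p, q, hp, hq, heq⟩ := hβ h htx
            have hpu : p = pth u := huniq u p hp
            have hqx : q = (pth x).reverse := by
              have : q.reverse = pth x := huniq x q.reverse hq.reverse
              rw [← this, Walk.reverse_reverse]
            rw [heq, hpu, hqx, hγ, hPu, hPx]
            simp [Walk.mapLe, Walk.reverse_map]
          refine ⟨β h htx :: L, ?_, ?_⟩
          · intro y hy
            rcases List.mem_cons.mp hy with hy | hy
            · exact Or.inl ⟨u, x, h, htx, hy⟩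
            · exact hL y hy
          · have : WalkEquiv (γ.append (Px.append S))
                ((β h htx).append (L.foldr Walk.append Walk.nil)) := by
              rw [hγβ]
              exact WalkEquiv.append_left _ hw
            exact e2.trans this
  intro w
  obtain ⟨L, hL, hw⟩ := M w
  have hΦ : pth Φ = Walk.nil := (huniq Φ Walk.nil Walk.IsPath.nil).symm
  refine ⟨L, hL, ?_⟩
  simpa [hΦ, Walk.append_nil] using hw
end

section
/- Let G be a connected graph, T a spanning tree, Φ a vertex, and e a single edge of G not in T. Any closed walk at Φ that traverses edges outside T exactly once, namely traversing e once, is equivalent (up to insertion/deletion of backtracks) to the standard walk β_e consisting of the tree path from Φ to the tail of e, the edge e, and the tree path from the head of e back to Φ. -/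
open SimpleGraph

section Aux

variable {V : Type*} {G : SimpleGraph V}

lemma WalkEquiv.append_right_s12 {a b c : V} (p : G.Walk a b) {q q' : G.Walk b c}
    (hq : WalkEquiv q q') : WalkEquiv (p.append q) (p.append q') := by
  induction hq with
  | refl _ => exact .refl _
  | symm _ ih => exact .symm ih
  | trans _ _ ih1 ih2 => exact .trans ih1 ih2
  | backtrack p₀ h q₀ =>
    rw [Walk.append_assoc, Walk.append_assoc]
    exact .backtrack _ h q₀

lemma WalkEquiv.append_left_s12 {a b c : V} {p p' : G.Walk a b} (hp : WalkEquiv p p')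
    (q : G.Walk b c) : WalkEquiv (p.append q) (p'.append q) := by
  induction hp with
  | refl _ => exact .refl _
  | symm _ ih => exact .symm (ih q)
  | trans _ _ ih1 ih2 => exact .trans (ih1 q) (ih2 q)
  | backtrack p₀ h q₀ =>
    rw [← Walk.append_assoc, ← Walk.append_assoc, Walk.cons_append, Walk.cons_append]
    exact .backtrack _ h (q₀.append q)

lemma WalkEquiv.cons_congr_s12 {a b c : V} (h : G.Adj a b) {q q' : G.Walk b c}
    (hq : WalkEquiv q q') : WalkEquiv (Walk.cons h q) (Walk.cons h q') := by
  have := WalkEquiv.append_right_s12 (Walk.cons h Walk.nil) hq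
  simpa using this

lemma WalkEquiv.backtrack_nil {a b c : V} (h : G.Adj a b) (q : G.Walk a c) :
    WalkEquiv q (Walk.cons h (Walk.cons h.symm q)) := by
  have := WalkEquiv.backtrack (Walk.nil : G.Walk a a) h q
  simpa using this

/-- In a tree, the image in `G` of any walk is equivalent to the image of any path
between the same endpoints. -/
lemma tree_walk_equiv_path [DecidableEq V] {T : SimpleGraph V} (hle : T ≤ G) (hT : T.IsTree) :
    ∀ {x y : V} (w : T.Walk x y) (r : T.Walk x y), r.IsPath →
      WalkEquiv (w.mapLe hle) (r.mapLe hle) := by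
  intro x y w
  induction w with
  | nil =>
    intro r hr
    have : r = Walk.nil := (hT.existsUnique_path _ _).unique hr Walk.IsPath.nil
    subst this
    exact .refl _
  | @cons x z y h' w' ih =>
    intro r hr
    obtain ⟨P, hP⟩ := (hT.existsUnique_path z y).exists
    have hstep : WalkEquiv ((Walk.cons h' w').mapLe hle)
        ((Walk.cons h' P).mapLe hle) := by
      simp only [Walk.map_cons]
      exact WalkEquiv.cons_congr_s12 _ (ih P hP)
    by_cases hx : x ∈ P.support
    · -- The path from z to y starts by going back to x.
      have h1 : (Walk.cons h'.symm Walk.nil : T.Walk z x).IsPath := by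
        simp [Walk.isPath_def, h'.ne']
      have h2 := hP.takeUntil hx
      have heq : P.takeUntil x hx = Walk.cons h'.symm Walk.nil :=
        (hT.existsUnique_path z x).unique h2 h1
      have hd := hP.dropUntil hx
      have hPeq : P = Walk.cons h'.symm (P.dropUntil x hx) := by
        conv_lhs => rw [← Walk.take_spec P hx]
        rw [heq]
        simp
      have hdr : P.dropUntil x hx = r :=
        (hT.existsUnique_path x y).unique hd hr
      refine hstep.trans ?_
      rw [hPeq, hdr]
      simp only [Walk.map_cons]
      exact (WalkEquiv.backtrack_nil _ _).symm
    · -- cons h' P is itself a path, hence equals r.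
      have hcons : (Walk.cons h' P).IsPath := hP.cons hx
      have : Walk.cons h' P = r := (hT.existsUnique_path x y).unique hcons hr
      rw [← this]
      exact hstep

/-- Split a walk at a dart with given endpoints. -/
lemma split_at_dart {u v : V} (hG : G.Adj u v) :
    ∀ {a b : V} (w : G.Walk a b) (d : G.Dart), d ∈ w.darts → d.toProd = (u, v) →
      ∃ (w₁ : G.Walk a u) (w₂ : G.Walk v b), w = w₁.append (Walk.cons hG w₂) := by
  intro a b w
  induction w with
  | nil => intro d hd; simp at hd
  | @cons a c b h' w' ih =>
    intro d hd htp
    rw [Walk.darts_cons, List.mem_cons] at hd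
    rcases hd with hd | hd
    · subst hd
      simp only [Prod.mk.injEq] at htp
      obtain ⟨rfl, rfl⟩ := htp
      exact ⟨Walk.nil, w', by simp⟩
    · obtain ⟨w₁, w₂, hw⟩ := ih d hd htp
      exact ⟨Walk.cons h' w₁, w₂, by rw [Walk.cons_append, hw]⟩

end Aux

/-- Case `n_γ = 1` of Theorem 3.1: a closed walk at `Φ` which traverses exactly one
non-tree edge `e = (u,v)`, exactly once and in the direction from `u` to `v`, is
equivalent (up to insertion/deletion of backtracks) to the standard walk `β_e`, namely
the tree path from `Φ` to `u`, the edge `e`, then the tree path from `v` back to `Φ`. -/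
theorem closed_walk_with_one_cotree_edge
    {V : Type*} [DecidableEq V] (G T : SimpleGraph V) (hle : T ≤ G)
    (hGconn : G.Connected) (hT : T.IsTree) (Φ u v : V)
    (h : G.Adj u v) (hn : ¬ T.Adj u v)
    (w : G.Walk Φ Φ)
    (hdir : ∀ d ∈ w.darts, d.edge ∉ T.edgeSet → d.toProd = (u, v))
    (honce : w.edges.count s(u, v) = 1)
    (p : T.Walk Φ u) (q : T.Walk v Φ) (hp : p.IsPath) (hq : q.IsPath) :
    WalkEquiv w ((p.mapLe hle).append (Walk.cons h (q.mapLe hle))) := by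
  -- find the dart traversing e
  have hmem : s(u, v) ∈ w.edges := by
    rw [← List.count_pos_iff]
    omega
  obtain ⟨d, hd, hde⟩ := List.mem_map.mp hmem
  have hdT : d.edge ∉ T.edgeSet := by
    rw [hde]
    exact fun hc => hn hc
  have htp : d.toProd = (u, v) := hdir d hd hdT
  obtain ⟨w₁, w₂, hw⟩ := split_at_dart h w d hd htp
  subst hw
  -- the non-tree edge occurs only at the splitting point
  have hcount : (w₁.append (Walk.cons h w₂)).edges.count s(u, v)
      = w₁.edges.count s(u, v) + (1 + w₂.edges.count s(u, v)) := by
    rw [Walk.edges_append, Walk.edges_cons, List.count_append, List.count_cons_self]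
    omega
  rw [hcount] at honce
  have h₁ : s(u, v) ∉ w₁.edges := by
    rw [← List.count_eq_zero]; omega
  have h₂ : s(u, v) ∉ w₂.edges := by
    rw [← List.count_eq_zero]; omega
  -- all edges of w₁ and w₂ lie in T
  have key : ∀ (x y : V) (w' : G.Walk x y), (∀ d' ∈ w'.darts, d' ∈ (w₁.append (Walk.cons h w₂)).darts) →
      s(u, v) ∉ w'.edges → ∀ e ∈ w'.edges, e ∈ T.edgeSet := by
    intro x y w' hsub hne e he
    obtain ⟨d', hd', hde'⟩ := List.mem_map.mp he
    by_contra hc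
    have := hdir d' (hsub d' hd') (hde' ▸ hc)
    have : d'.edge = s(u, v) := by
      rw [SimpleGraph.Dart.edge, this]
    exact hne (this ▸ hde' ▸ List.mem_map_of_mem (f := SimpleGraph.Dart.edge) hd')
  have hT₁ : ∀ e ∈ w₁.edges, e ∈ T.edgeSet := by
    refine key _ _ w₁ ?_ h₁
    intro d' hd'
    rw [Walk.darts_append, List.mem_append]
    exact Or.inl hd'
  have hT₂ : ∀ e ∈ w₂.edges, e ∈ T.edgeSet := by
    refine key _ _ w₂ ?_ h₂
    intro d' hd'
    rw [Walk.darts_append, Walk.darts_cons, List.mem_append, List.mem_cons]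
    exact Or.inr (Or.inr hd')
  -- transfer to T
  have hw₁ : (w₁.transfer T hT₁).mapLe hle = w₁ := by
    rw [Walk.mapLe, ← Walk.transfer_eq_map_ofLE, Walk.transfer_transfer, Walk.transfer_self]
    intro e
    rw [Walk.edges_transfer]
    apply Walk.edges_subset_edgeSet
  have hw₂ : (w₂.transfer T hT₂).mapLe hle = w₂ := by
    rw [Walk.mapLe, ← Walk.transfer_eq_map_ofLE, Walk.transfer_transfer, Walk.transfer_self]
    intro e
    rw [Walk.edges_transfer]
    apply Walk.edges_subset_edgeSet
  have e₁ : WalkEquiv w₁ (p.mapLe hle) := by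
    rw [← hw₁]
    exact tree_walk_equiv_path hle hT _ p hp
  have e₂ : WalkEquiv w₂ (q.mapLe hle) := by
    rw [← hw₂]
    exact tree_walk_equiv_path hle hT _ q hq
  exact (WalkEquiv.append_left_s12 e₁ _).trans
    (WalkEquiv.append_right_s12 _ (WalkEquiv.cons_congr_s12 h e₂))
end
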